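/- Let n ≥ 3 and 2 ≤ r ≤ n−1. The number of sparse-paving matroids of rank r on a ground set of cardinality n is at least 2^⌈C(n,r)/(r(n−r)+1)⌉. -/

import Mathlib

/-- A circuit of a matroid: a minimal dependent subset of the ground set. -/
def Matroid.IsCircuit' {α : Type*} (M : Matroid α) (C : Set α) : Prop :=
  C ⊆ M.E ∧ ¬ M.Indep C ∧ ∀ D : Set α, D ⊂ C → M.Indep D

/-- A matroid is paving if it has no circuit of cardinality less than its rank
(the common cardinality of its bases). -/
def Matroid.IsPaving {α : Type*} (M : Matroid α) : Prop :=
  ∀ C : Set α, M.IsCircuit' C → ∀ B : Set α, M.IsBase B → B.ncard ≤ C.ncard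

/-- The set of matroids of rank `r` on the `n`-element ground set `Fin n`. -/
def MatroidSet (n r : ℕ) : Set (Matroid (Fin n)) :=
  {M | M.E = Set.univ ∧ ∀ B : Set (Fin n), M.IsBase B → B.ncard = r}

/-- The set of sparse-paving matroids of rank `r` on `Fin n`. -/
def SparseSet (n r : ℕ) : Set (Matroid (Fin n)) :=
  {M | M ∈ MatroidSet n r ∧ M.IsPaving ∧ M✶.IsPaving}

open Set

namespace SPX

variable {n r : ℕ}

/-- The admissibility condition on a circuit family. -/
def Good (n r : ℕ) (F : Set (Set (Fin n))) : Prop :=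
  (∀ C ∈ F, C.ncard = r) ∧ ∀ A ∈ F, ∀ B ∈ F, (A ∩ B).ncard + 2 ≤ r ∨ A = B

/-- Independence predicate. -/
def Ind (r : ℕ) (F : Set (Set (Fin n))) (I : Set (Fin n)) : Prop :=
  I.ncard ≤ r ∧ I ∉ F

lemma key {F : Set (Set (Fin n))} (hF : Good n r F) {A B : Set (Fin n)}
    (hA : A ∈ F) (hB : B ∈ F) (h : r - 1 ≤ (A ∩ B).ncard) : A = B := by
  rcases hF.2 A hA B hB with h2 | h2
  · have hAr := hF.1 A hA
    have hle : (A ∩ B).ncard ≤ A.ncard := ncard_le_ncard inter_subset_left A.toFinite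
    omega
  · exact h2

lemma two_ext {F : Set (Set (Fin n))} (hF : Good n r F) {I : Set (Fin n)}
    {e₁ e₂ : Fin n} (h1 : e₁ ∉ I) (h2 : e₂ ∉ I) (hne : e₁ ≠ e₂) (hI : I.ncard + 1 = r) :
    insert e₁ I ∉ F ∨ insert e₂ I ∉ F := by
  by_contra hc
  push_neg at hc
  have hsub : I ⊆ insert e₁ I ∩ insert e₂ I :=
    subset_inter (subset_insert _ _) (subset_insert _ _)
  have hcard : r - 1 ≤ (insert e₁ I ∩ insert e₂ I).ncard := by
    have := ncard_le_ncard hsub (toFinite _)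
    omega
  have heq := key hF hc.1 hc.2 hcard
  have : e₁ ∈ insert e₂ I := heq ▸ mem_insert _ _
  rcases this with h | h
  · exact hne h
  · exact h1 h

lemma ind_subset {F : Set (Set (Fin n))} (hF : Good n r F) :
    ∀ ⦃I J : Set (Fin n)⦄, Ind r F J → I ⊆ J → Ind r F I := by
  rintro I J ⟨hJc, hJF⟩ hIJ
  have hIc : I.ncard ≤ J.ncard := ncard_le_ncard hIJ J.toFinite
  refine ⟨hIc.trans hJc, fun hIF => ?_⟩
  have : I = J := eq_of_subset_of_ncard_le hIJ (by have := hF.1 I hIF; omega) J.toFinite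
  exact hJF (this ▸ hIF)

lemma ind_aug {F : Set (Set (Fin n))} (hF : Good n r F) :
    ∀ ⦃I J : Set (Fin n)⦄, Ind r F I → Ind r F J → I.ncard < J.ncard →
      ∃ e ∈ J, e ∉ I ∧ Ind r F (insert e I) := by
  rintro I J ⟨hIc, hIF⟩ ⟨hJc, hJF⟩ hlt
  by_cases hI2 : I.ncard + 2 ≤ r
  · obtain ⟨e, heJ, heI⟩ := exists_mem_notMem_of_ncard_lt_ncard hlt
    refine ⟨e, heJ, heI, ⟨?_, fun hmem => ?_⟩⟩
    · have := ncard_insert_le e I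
      omega
    · have := hF.1 _ hmem
      have := ncard_insert_le e I
      omega
  · have hIr : I.ncard + 1 = r := by omega
    by_cases h1 : 1 < (J \ I).ncard
    · obtain ⟨e₁, he₁, e₂, he₂, hne⟩ := (one_lt_ncard (toFinite _)).mp h1
      have hcard : ∀ e, e ∉ I → (insert e I).ncard ≤ r := by
        intro e he
        rw [ncard_insert_of_notMem he I.toFinite]; omega
      rcases two_ext hF he₁.2 he₂.2 hne hIr with h | h
      · exact ⟨e₁, he₁.1, he₁.2, hcard _ he₁.2, h⟩
      · exact ⟨e₂, he₂.1, he₂.2, hcard _ he₂.2, h⟩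
    · -- `J \ I` has exactly one element `e`, and then `insert e I = J`.
      have hJI : (J ∩ I).ncard + (J \ I).ncard = J.ncard :=
        ncard_inter_add_ncard_diff_eq_ncard J I J.toFinite
      have hne : (J \ I).Nonempty := by
        rw [Set.diff_nonempty]
        intro hsub
        exact absurd (ncard_le_ncard hsub I.toFinite) (by omega)
      have h1' : (J \ I).ncard = 1 := by
        have := hne.ncard_pos (toFinite _)
        omega
      obtain ⟨e, he⟩ := ncard_eq_one.mp h1'
      have hinter : J ∩ I = I := by
        have hle : (J ∩ I).ncard ≤ I.ncard := ncard_le_ncard inter_subset_right I.toFinite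
        exact eq_of_subset_of_ncard_le inter_subset_right (by omega) I.toFinite
      have hJeq : J = insert e I := by
        have : (J \ I) ∪ (J ∩ I) = J := by
          rw [diff_union_inter]
        rw [← this, he, hinter, singleton_union]
      have heJ : e ∈ J \ I := by rw [he]; exact rfl
      exact ⟨e, heJ.1, heJ.2, hJeq ▸ ⟨hJc, hJF⟩⟩

open Classical in
/-- The sparse paving matroid associated to an admissible family `F`. -/
noncomputable def matF (n r : ℕ) (F : Set (Set (Fin n))) : Matroid (Fin n) :=
  if h : Good n r F ∧ 1 ≤ r then
    (IndepMatroid.ofFinite (Set.finite_univ (α := Fin n)) (Ind r F)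
      ⟨by simp, fun h0 => by
        have h1 := h.1.1 _ h0
        have h2 := h.2
        rw [ncard_empty] at h1
        omega⟩
      (ind_subset h.1) (ind_aug h.1) (fun I _ => subset_univ I)).matroid
  else Matroid.emptyOn _

lemma matF_indep {F : Set (Set (Fin n))} (hF : Good n r F) (hr : 1 ≤ r) (I : Set (Fin n)) :
    (matF n r F).Indep I ↔ Ind r F I := by
  rw [matF, dif_pos ⟨hF, hr⟩]
  simp
  rfl

lemma matF_ground {F : Set (Set (Fin n))} (hF : Good n r F) (hr : 1 ≤ r) :
    (matF n r F).E = Set.univ := by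
  rw [matF, dif_pos ⟨hF, hr⟩]
  simp
  rfl

lemma matF_base {F : Set (Set (Fin n))} (hF : Good n r F) (hr : 1 ≤ r) (hrn : r + 1 ≤ n)
    (B : Set (Fin n)) : (matF n r F).IsBase B ↔ B.ncard = r ∧ B ∉ F := by
  rw [Matroid.isBase_iff_maximal_indep]
  have hind : (matF n r F).Indep = Ind r F := by
    funext I; exact propext (matF_indep hF hr I)
  rw [hind]
  constructor
  · rintro ⟨⟨hBc, hBF⟩, hmax⟩
    refine ⟨?_, hBF⟩
    by_contra hne
    have hBlt : B.ncard + 1 ≤ r := by omega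
    -- find an independent proper extension of B
    have hcompl : 2 ≤ Bᶜ.ncard := by
      have h1 := ncard_add_ncard_compl B
      have hn : Nat.card (Fin n) = n := by simp
      omega
    obtain ⟨e₁, he₁, e₂, he₂, hnee⟩ := (one_lt_ncard (toFinite _)).mp hcompl
    have hins : ∀ e, e ∉ B → Ind r F (insert e B) → False := by
      intro e he hi
      have := hmax hi (subset_insert _ _)
      exact he (this (mem_insert _ _))
    have hcard : ∀ e, e ∉ B → (insert e B).ncard ≤ r := by
      intro e he
      rw [ncard_insert_of_notMem he B.toFinite]; omega
    by_cases h2 : B.ncard + 2 ≤ r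
    · refine hins e₁ he₁ ⟨hcard _ he₁, fun hm => ?_⟩
      have h3 := hF.1 _ hm
      have h4 := ncard_insert_of_notMem he₁ B.toFinite
      omega
    · have hB1 : B.ncard + 1 = r := by omega
      rcases two_ext hF he₁ he₂ hnee hB1 with h | h
      · exact hins e₁ he₁ ⟨hcard _ he₁, h⟩
      · exact hins e₂ he₂ ⟨hcard _ he₂, h⟩
  · rintro ⟨hBc, hBF⟩
    refine ⟨⟨le_of_eq hBc, hBF⟩, ?_⟩
    rintro J ⟨hJc, _⟩ hBJ
    exact (eq_of_subset_of_ncard_le hBJ (by omega) J.toFinite).symm.subset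

/-- every big enough set contains a basis -/
lemma exists_base_subset {F : Set (Set (Fin n))} (hF : Good n r F) (hr : 1 ≤ r)
    {X : Set (Fin n)} (hX : r + 1 ≤ X.ncard) : ∃ G ⊆ X, G.ncard = r ∧ G ∉ F := by
  obtain ⟨Y, hYX, hYc⟩ := Set.exists_subset_card_eq hX
  have h2 : 1 < Y.ncard := by omega
  obtain ⟨z₁, hz₁, z₂, hz₂, hz⟩ := (one_lt_ncard (toFinite _)).mp h2
  have hG1 : (Y \ {z₁}).ncard = r := by
    rw [ncard_diff_singleton_of_mem hz₁, hYc]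
    omega
  have hG2 : (Y \ {z₂}).ncard = r := by
    rw [ncard_diff_singleton_of_mem hz₂, hYc]
    omega
  have hGsub1 : Y \ {z₁} ⊆ X := diff_subset.trans hYX
  have hGsub2 : Y \ {z₂} ⊆ X := diff_subset.trans hYX
  by_cases h1 : Y \ {z₁} ∈ F
  · by_cases hh2 : Y \ {z₂} ∈ F
    · exfalso
      have hun : ((Y \ {z₁}) ∪ (Y \ {z₂})).ncard ≤ r + 1 := by
        rw [← hYc]
        exact ncard_le_ncard (union_subset diff_subset diff_subset) Y.toFinite
      have hiu := ncard_union_add_ncard_inter (Y \ {z₁}) (Y \ {z₂}) (toFinite _) (toFinite _)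
      have hkey := key hF h1 hh2 (by omega)
      have : z₂ ∈ Y \ {z₂} := hkey ▸ ⟨hz₂, by simp [hz.symm]⟩
      simp at this
    · exact ⟨Y \ {z₂}, hGsub2, hG2, hh2⟩
  · exact ⟨Y \ {z₁}, hGsub1, hG1, h1⟩

lemma matF_sparse {F : Set (Set (Fin n))} (hF : Good n r F) (hr : 1 ≤ r) (hrn : r + 1 ≤ n) :
    matF n r F ∈ SparseSet n r := by
  have hbase := matF_base hF hr hrn
  have hind := matF_indep hF hr
  refine ⟨⟨matF_ground hF hr, fun B hB => ((hbase B).mp hB).1⟩, ?_, ?_⟩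
  · rintro C ⟨-, hCdep, -⟩ B hB
    rw [(hbase B).mp hB |>.1]
    rw [hind] at hCdep
    by_contra hlt
    push_neg at hlt
    exact hCdep ⟨by omega, fun hm => by have := hF.1 _ hm; omega⟩
  · rintro C ⟨hCE, hCdep, -⟩ B hB
    rw [Matroid.dual_isBase_iff'] at hB
    obtain ⟨hB1, hB2⟩ := hB
    have hGE : (matF n r F).E = univ := matF_ground hF hr
    have hBcard : B.ncard = n - r := by
      have h1 : ((matF n r F).E \ B).ncard = r := ((hbase _).mp hB1).1
      rw [hGE] at h1 hB2
      have h2 : B.ncard + (univ \ B).ncard = n := by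
        have := ncard_add_ncard_compl B
        rw [compl_eq_univ_diff] at this
        simpa using this
      omega
    rw [hBcard]
    by_contra hlt
    push_neg at hlt
    -- complement of C has ≥ r + 1 elements, hence contains a base disjoint from C
    have hCc : r + 1 ≤ Cᶜ.ncard := by
      have h1 := ncard_add_ncard_compl C
      have hn : Nat.card (Fin n) = n := by simp
      omega
    obtain ⟨G, hGsub, hGc, hGF⟩ := exists_base_subset hF hr hCc
    apply hCdep
    rw [Matroid.dual_indep_iff_exists']
    refine ⟨hCE, G, (hbase G).mpr ⟨hGc, hGF⟩, ?_⟩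
    rw [disjoint_comm]
    exact disjoint_compl_left.mono_left hGsub

lemma matF_inj {F F' : Set (Set (Fin n))} (hF : Good n r F) (hF' : Good n r F') (hr : 1 ≤ r)
    (h : matF n r F = matF n r F') : F = F' := by
  have hmem : ∀ (G G' : Set (Set (Fin n))), Good n r G → Good n r G' →
      matF n r G = matF n r G' → G ⊆ G' := by
    intro G G' hG hG' heq C hC
    have hCc := hG.1 C hC
    have hdep : ¬ (matF n r G).Indep C := by
      rw [matF_indep hG hr]
      rintro ⟨-, hCF⟩; exact hCF hC
    rw [heq, matF_indep hG' hr] at hdep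
    rw [Ind] at hdep
    push_neg at hdep
    exact hdep (le_of_eq hCc)
  exact subset_antisymm (hmem F F' hF hF' h) (hmem F' F hF' hF h.symm)

lemma johnson_good {c : Fin n} [NeZero n] (hr : 0 < r) (𝒢 : Finset (Finset (Fin n)))
    (h𝒢 : ∀ A ∈ 𝒢, A.card = r ∧ ∑ a ∈ A, a = c) :
    Good n r ((fun t : Finset (Fin n) => (↑t : Set (Fin n))) '' ↑𝒢) := by
  constructor
  · rintro C ⟨t, ht, rfl⟩
    rw [ncard_coe_finset]
    exact (h𝒢 t ht).1
  · rintro A ⟨s, hs, rfl⟩ B ⟨t, ht, rfl⟩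
    obtain ⟨hscard, hssum⟩ := h𝒢 s hs
    obtain ⟨htcard, htsum⟩ := h𝒢 t ht
    by_cases hst : s = t
    · right; rw [hst]
    · left
      rw [← Finset.coe_inter, ncard_coe_finset]
      by_contra hbig
      push_neg at hbig
      have hint_le : (s ∩ t).card ≤ r := hscard ▸ Finset.card_le_card Finset.inter_subset_left
      have hint_ne : (s ∩ t).card ≠ r := by
        intro heq
        apply hst
        have h1 : s ⊆ t := by
          have := Finset.eq_of_subset_of_card_le Finset.inter_subset_left
            (le_of_le_of_eq hscard.le heq.symm)
          rw [← this]
          exact Finset.inter_subset_right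
        exact Finset.eq_of_subset_of_card_le h1 (le_of_eq (htcard.trans hscard.symm))
      have hint : (s ∩ t).card = r - 1 := by omega
      have hsd : (s \ t).card = 1 := by
        have := Finset.card_inter_add_card_sdiff s t
        omega
      have htd : (t \ s).card = 1 := by
        have := Finset.card_inter_add_card_sdiff t s
        rw [Finset.inter_comm] at this
        omega
      obtain ⟨a, ha⟩ := Finset.card_eq_one.mp hsd
      obtain ⟨b, hb⟩ := Finset.card_eq_one.mp htd
      have hsplit : ∀ (u v : Finset (Fin n)), ∑ x ∈ u \ v, x + ∑ x ∈ u ∩ v, x = ∑ x ∈ u, x := by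
        intro u v
        rw [← Finset.sum_union (Finset.disjoint_sdiff_inter u v), Finset.sdiff_union_inter]
      have hsum_s : a + ∑ x ∈ s ∩ t, x = c := by
        rw [← hssum, ← hsplit s t, ha, Finset.sum_singleton]
      have hsum_t : b + ∑ x ∈ s ∩ t, x = c := by
        rw [← htsum, ← hsplit t s, hb, Finset.sum_singleton, Finset.inter_comm]
      have hab : a = b := add_right_cancel (hsum_s.trans hsum_t.symm)
      apply hst
      calc s = s \ t ∪ s ∩ t := (Finset.sdiff_union_inter s t).symm
        _ = t \ s ∪ t ∩ s := by rw [ha, hb, hab, Finset.inter_comm]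
        _ = t := Finset.sdiff_union_inter t s

instance matroidFinite : Finite (Matroid (Fin n)) := by
  apply Finite.of_injective (fun M => (M.E, M.Indep))
  intro M N h
  rw [Prod.mk.injEq] at h
  exact Matroid.ext_indep h.1 (fun I _ => by rw [h.2])

theorem stmt6 (n r : ℕ) (hn : 3 ≤ n) (hr2 : 2 ≤ r) (hrn : r ≤ n - 1) :
    2 ^ ⌈(n.choose r : ℚ) / ((r * (n - r) + 1 : ℕ) : ℚ)⌉₊ ≤ (SparseSet n r).ncard := by
  haveI : NeZero n := ⟨by omega⟩
  have hrn' : r + 1 ≤ n := by omega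
  have hr1 : 1 ≤ r := by omega
  classical
  set 𝒮 : Finset (Finset (Fin n)) := Finset.powersetCard r Finset.univ with h𝒮
  have h𝒮card : 𝒮.card = n.choose r := by
    rw [h𝒮, Finset.card_powersetCard, Finset.card_univ, Fintype.card_fin]
  set T : Fin n → Finset (Finset (Fin n)) :=
    fun c => 𝒮.filter (fun A => ∑ a ∈ A, a = c) with hT
  have hfib : 𝒮.card = ∑ c : Fin n, (T c).card :=
    Finset.card_eq_sum_card_fiberwise (fun A _ => Finset.mem_univ _)
  obtain ⟨c, -, hc⟩ : ∃ c ∈ (Finset.univ : Finset (Fin n)), 𝒮.card ≤ n * (T c).card := by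
    apply Finset.exists_le_of_sum_le Finset.univ_nonempty
    calc ∑ _c : Fin n, 𝒮.card = n * 𝒮.card := by
          rw [Finset.sum_const, Finset.card_univ, Fintype.card_fin, smul_eq_mul]
      _ = ∑ c : Fin n, n * (T c).card := by rw [hfib, Finset.mul_sum]
      _ ≤ ∑ c : Fin n, n * (T c).card := le_refl _
  -- every subset of the fiber `T c` yields a sparse paving matroid
  have hTmem : ∀ A ∈ T c, A.card = r ∧ ∑ a ∈ A, a = c := by
    intro A hA
    rw [hT] at hA
    simp only [Finset.mem_filter, h𝒮, Finset.mem_powersetCard] at hA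
    exact ⟨hA.1.2, hA.2⟩
  set f : Finset (Finset (Fin n)) → Matroid (Fin n) :=
    fun 𝒢 => matF n r ((fun t : Finset (Fin n) => (↑t : Set (Fin n))) '' ↑𝒢) with hf
  have hgood : ∀ 𝒢 ∈ (T c).powerset,
      Good n r ((fun t : Finset (Fin n) => (↑t : Set (Fin n))) '' ↑𝒢) := by
    intro 𝒢 h𝒢
    rw [Finset.mem_powerset] at h𝒢
    exact johnson_good (by omega) 𝒢 (fun A hA => hTmem A (h𝒢 hA))
  have hsub : f '' ↑((T c).powerset) ⊆ SparseSet n r := by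
    rintro M ⟨𝒢, h𝒢, rfl⟩
    exact matF_sparse (hgood 𝒢 h𝒢) hr1 hrn'
  have hinj : Set.InjOn f ↑((T c).powerset) := by
    intro 𝒢₁ h₁ 𝒢₂ h₂ heq
    have hFeq := matF_inj (hgood 𝒢₁ h₁) (hgood 𝒢₂ h₂) hr1 heq
    have hcoe : (↑𝒢₁ : Set (Finset (Fin n))) = ↑𝒢₂ :=
      Set.image_injective.mpr Finset.coe_injective hFeq
    exact Finset.coe_injective hcoe
  have himg : (f '' ↑((T c).powerset)).ncard = 2 ^ (T c).card := by
    rw [Set.ncard_image_of_injOn hinj, ncard_coe_finset, Finset.card_powerset]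
  have hfin : (SparseSet n r).Finite := Set.toFinite _
  have hcount : 2 ^ (T c).card ≤ (SparseSet n r).ncard := by
    rw [← himg]
    exact Set.ncard_le_ncard hsub hfin
  refine le_trans (Nat.pow_le_pow_right (by norm_num) ?_) hcount
  -- ceiling bound
  rw [Nat.ceil_le]
  have hd0 : 0 < r * (n - r) + 1 := by omega
  rw [div_le_iff₀ (by exact_mod_cast hd0)]
  have hnd : n ≤ r * (n - r) + 1 := by
    obtain ⟨k, hk⟩ : ∃ k, n = r + k := ⟨n - r, by omega⟩
    have hk1 : 1 ≤ k := by omega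
    have : n - r = k := by omega
    rw [this, hk]
    nlinarith
  have hnat : n.choose r ≤ (T c).card * (r * (n - r) + 1) := by
    calc n.choose r = 𝒮.card := h𝒮card.symm
      _ ≤ n * (T c).card := hc
      _ ≤ (r * (n - r) + 1) * (T c).card := Nat.mul_le_mul_right _ hnd
      _ = (T c).card * (r * (n - r) + 1) := Nat.mul_comm _ _
  exact_mod_cast hnat

end SPX

theorem stmt6 (n r : ℕ) (hn : 3 ≤ n) (hr2 : 2 ≤ r) (hrn : r ≤ n - 1) :
    2 ^ ⌈(n.choose r : ℚ) / ((r * (n - r) + 1 : ℕ) : ℚ)⌉₊ ≤ (SparseSet n r).ncard :=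
  SPX.stmt6 n r hn hr2 hrn
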